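/- arXiv:1407.4095 — 3 statements merged into one kernel-verified Lean document; each statement's English description precedes it below -/
import Mathlib

section
/- For the block-diagonal matrix M = [[P,0],[0,R]] with P, R nonnegative, rank_psd(M) = rank_psd(P) + rank_psd(R). -/
open Matrix

/-- A psd factorization of size `k` of `M`: symmetric psd matrices `A i`, `B j`
with `M i j = trace (A i * B j)`. -/
def IsPsdFact {m n : Type*} (M : Matrix m n ℝ) {k : ℕ}
    (A : m → Matrix (Fin k) (Fin k) ℝ) (B : n → Matrix (Fin k) (Fin k) ℝ) : Prop :=
  (∀ i, (A i).PosSemidef) ∧ (∀ j, (B j).PosSemidef) ∧ ∀ i j, M i j = (A i * B j).trace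

/-- `M` admits a psd factorization of size `k`. -/
def HasPsdFact {m n : Type*} (M : Matrix m n ℝ) (k : ℕ) : Prop :=
  ∃ (A : m → Matrix (Fin k) (Fin k) ℝ) (B : n → Matrix (Fin k) (Fin k) ℝ), IsPsdFact M A B

/-- The psd rank of `M`: the smallest size of a psd factorization. -/
noncomputable def psdRank {m n : Type*} (M : Matrix m n ℝ) : ℕ :=
  sInf {k | HasPsdFact M k}

/-! ### Auxiliary lemmas -/

section Aux

open scoped RealInnerProductSpace

variable {k : ℕ}

lemma inner_eq_dot (x y : EuclideanSpace ℝ (Fin k)) : ⟪x, y⟫ = x ⬝ᵥ y := by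
  simp [PiLp.inner_apply, RCLike.inner_apply, dotProduct, mul_comm]

lemma euclid_sum_apply {ι : Type*} (s : Finset ι) (f : ι → EuclideanSpace ℝ (Fin k))
    (i : Fin k) : (∑ t ∈ s, f t) i = ∑ t ∈ s, f t i := by
  rw [WithLp.ofLp_sum]
  exact Finset.sum_apply i s _

noncomputable def onbMat (U : Submodule ℝ (EuclideanSpace ℝ (Fin k))) :
    Matrix (Fin k) (Fin (Module.finrank ℝ U)) ℝ :=
  fun x t => (stdOrthonormalBasis ℝ U t : EuclideanSpace ℝ (Fin k)) x

noncomputable def projMat (U : Submodule ℝ (EuclideanSpace ℝ (Fin k))) :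
    Matrix (Fin k) (Fin k) ℝ :=
  onbMat U * (onbMat U)ᵀ

lemma onb_tmul (U : Submodule ℝ (EuclideanSpace ℝ (Fin k))) :
    (onbMat U)ᵀ * onbMat U = 1 := by
  ext s t
  have horth := orthonormal_iff_ite.mp (stdOrthonormalBasis ℝ U).orthonormal s t
  have h2 : ⟪(stdOrthonormalBasis ℝ U s : EuclideanSpace ℝ (Fin k)),
      (stdOrthonormalBasis ℝ U t : EuclideanSpace ℝ (Fin k))⟫ = if s = t then (1:ℝ) else 0 :=
    horth
  rw [inner_eq_dot] at h2
  simpa [Matrix.mul_apply, onbMat, Matrix.one_apply, dotProduct] using h2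

lemma projMat_transpose (U : Submodule ℝ (EuclideanSpace ℝ (Fin k))) :
    (projMat U)ᵀ = projMat U := by
  simp [projMat, Matrix.transpose_mul]

lemma projMat_mulVec (U : Submodule ℝ (EuclideanSpace ℝ (Fin k))) (x : Fin k → ℝ) :
    projMat U *ᵥ x = ∑ t, ((stdOrthonormalBasis ℝ U t : EuclideanSpace ℝ (Fin k)) ⬝ᵥ x) •
      (stdOrthonormalBasis ℝ U t : EuclideanSpace ℝ (Fin k)) := by
  funext i
  rw [euclid_sum_apply, projMat, ← Matrix.mulVec_mulVec]
  show ∑ t, onbMat U i t * ((onbMat U)ᵀ *ᵥ x) t = _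
  exact Finset.sum_congr rfl fun t _ => mul_comm _ _

lemma projMat_mulVec_mem (U : Submodule ℝ (EuclideanSpace ℝ (Fin k))) (x : Fin k → ℝ) :
    WithLp.toLp 2 (projMat U *ᵥ x) ∈ U := by
  rw [projMat_mulVec, WithLp.toLp_ofLp]
  exact Submodule.sum_mem _ fun t _ => Submodule.smul_mem _ _ (SetLike.coe_mem _)

lemma projMat_mulVec_eq_self (U : Submodule ℝ (EuclideanSpace ℝ (Fin k))) {x : Fin k → ℝ}
    (hx : WithLp.toLp 2 x ∈ U) : projMat U *ᵥ x = x := by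
  rw [projMat_mulVec]
  have h1 := (stdOrthonormalBasis ℝ U).sum_repr' (⟨WithLp.toLp 2 x, hx⟩ : U)
  have h2 := congrArg (Submodule.subtype U) h1
  simp only [map_sum, LinearMap.map_smul, Submodule.coe_subtype] at h2
  refine congrArg (WithLp.ofLp (p := 2)) (Eq.trans (Finset.sum_congr rfl fun t _ => ?_) h2)
  congr 1
  rw [Submodule.coe_inner, inner_eq_dot]

lemma dot_projMat (U : Submodule ℝ (EuclideanSpace ℝ (Fin k))) (x y : Fin k → ℝ) :
    (projMat U *ᵥ x) ⬝ᵥ y = x ⬝ᵥ (projMat U *ᵥ y) := by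
  have hy : y ᵥ* projMat U = projMat U *ᵥ y := by
    rw [← Matrix.mulVec_transpose, projMat_transpose]
  rw [dotProduct_comm, Matrix.dotProduct_mulVec, hy, dotProduct_comm]

lemma projMat_orth (U : Submodule ℝ (EuclideanSpace ℝ (Fin k))) (x : Fin k → ℝ)
    {u : Fin k → ℝ} (hu : WithLp.toLp 2 u ∈ U) : (x - projMat U *ᵥ x) ⬝ᵥ u = 0 := by
  rw [sub_dotProduct, dot_projMat, projMat_mulVec_eq_self U hu, sub_self]

lemma projMat_unique (U : Submodule ℝ (EuclideanSpace ℝ (Fin k))) {x y : Fin k → ℝ}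
    (hy : WithLp.toLp 2 y ∈ U) (h : ∀ u ∈ U, (x - y) ⬝ᵥ u = 0) : projMat U *ᵥ x = y := by
  have hd : WithLp.toLp 2 (projMat U *ᵥ x - y) ∈ U := Submodule.sub_mem _ (projMat_mulVec_mem U x) hy
  have e : projMat U *ᵥ x - y = x - y - (x - projMat U *ᵥ x) := by abel
  have hB : WithLp.toLp 2 (x - y - (x - projMat U *ᵥ x)) ∈ U := e ▸ hd
  have hdd : (x - y - (x - projMat U *ᵥ x)) ⬝ᵥ (x - y - (x - projMat U *ᵥ x)) = 0 := by
    rw [sub_dotProduct, h _ hB, projMat_orth U x hB, sub_self]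
  have h0 : projMat U *ᵥ x - y = 0 := by
    apply dotProduct_self_eq_zero.mp
    rw [e]; exact hdd
  rwa [sub_eq_zero] at h0

lemma projMat_eq_zero (U : Submodule ℝ (EuclideanSpace ℝ (Fin k))) {x : Fin k → ℝ}
    (h : ∀ u ∈ U, x ⬝ᵥ u = 0) : projMat U *ᵥ x = 0 :=
  projMat_unique U (Submodule.zero_mem U) (by simpa using h)

lemma ext_mulVec {a b : ℕ} {M N : Matrix (Fin a) (Fin b) ℝ}
    (h : ∀ v, M *ᵥ v = N *ᵥ v) : M = N := by
  ext i j
  have := congrFun (h (Pi.single j 1)) i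
  simpa [Matrix.mulVec_single] using this

lemma projMat_decomp {Z U : Submodule ℝ (EuclideanSpace ℝ (Fin k))} (hZU : Z ≤ U) :
    projMat U = projMat Z + projMat (Zᗮ ⊓ U) := by
  apply ext_mulVec
  intro x
  rw [Matrix.add_mulVec]
  refine projMat_unique U ?_ ?_
  · exact Submodule.add_mem _ (hZU (projMat_mulVec_mem Z x))
      ((inf_le_right : Zᗮ ⊓ U ≤ U) (projMat_mulVec_mem _ x))
  · intro u hu
    rw [← Submodule.sup_orthogonal_inf_of_hasOrthogonalProjection hZU] at hu
    obtain ⟨z, hz, w, hw, rfl⟩ := Submodule.mem_sup.mp hu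
    have horthZW : ∀ a ∈ Z, ∀ c ∈ Zᗮ ⊓ U, (a : Fin k → ℝ) ⬝ᵥ (c : Fin k → ℝ) = 0 := by
      intro a ha c hc
      rw [← inner_eq_dot]
      exact (Submodule.mem_orthogonal Z c).mp hc.1 a ha
    have hPZw : projMat Z *ᵥ w = 0 := projMat_eq_zero Z fun u hu => by
      rw [dotProduct_comm]; exact horthZW u hu w hw
    have hPWz : projMat (Zᗮ ⊓ U) *ᵥ z = 0 := projMat_eq_zero _ fun u hu =>
      horthZW z hz u hu
    have c1 : (x - projMat Z *ᵥ x) ⬝ᵥ z = 0 := projMat_orth Z x hz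
    have c2 : (projMat (Zᗮ ⊓ U) *ᵥ x) ⬝ᵥ z = 0 := by
      rw [dot_projMat, hPWz, dotProduct_zero]
    have c3 : (x - projMat (Zᗮ ⊓ U) *ᵥ x) ⬝ᵥ w = 0 := projMat_orth _ x hw
    have c4 : (projMat Z *ᵥ x) ⬝ᵥ w = 0 := by
      rw [dot_projMat, hPZw, dotProduct_zero]
    have dpa : ∀ (v : Fin k → ℝ) (a b : EuclideanSpace ℝ (Fin k)),
        v ⬝ᵥ (a + b) = v ⬝ᵥ a + v ⬝ᵥ b := fun v a b => dotProduct_add v a b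
    simp only [sub_dotProduct, add_dotProduct, WithLp.ofLp_add, dpa] at c1 c3 ⊢
    linarith [c1, c2, c3, c4]


-- hereafter: factorization lemmas

lemma trace_tmul_self_zero {m n : ℕ} (X : Matrix (Fin m) (Fin n) ℝ)
    (h : (Xᵀ * X).trace = 0) : X = 0 := by
  have h' : ∑ j, ∑ i, X i j * X i j = 0 := by
    simpa [Matrix.trace, Matrix.diag, Matrix.mul_apply] using h
  ext i j
  have h2 := (Finset.sum_eq_zero_iff_of_nonneg (fun j _ =>
    Finset.sum_nonneg fun i _ => mul_self_nonneg (X i j))).mp h' j (Finset.mem_univ j)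
  have h3 := (Finset.sum_eq_zero_iff_of_nonneg (fun i _ => mul_self_nonneg (X i j))).mp
    h2 i (Finset.mem_univ i)
  simpa using mul_self_eq_zero.mp h3

open scoped MatrixOrder in
lemma psd_mul_eq_zero {n : ℕ} {A B : Matrix (Fin n) (Fin n) ℝ}
    (hA : A.PosSemidef) (hB : B.PosSemidef) (h : (A * B).trace = 0) : A * B = 0 := by
  obtain ⟨L, hL⟩ := CStarAlgebra.nonneg_iff_eq_star_mul_self.mp hA.nonneg
  obtain ⟨M, hM⟩ := CStarAlgebra.nonneg_iff_eq_star_mul_self.mp hB.nonneg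
  rw [star_eq_conjTranspose, conjTranspose_eq_transpose_of_trivial] at hL hM
  have hN : M * Lᵀ = 0 := by
    apply trace_tmul_self_zero
    have e : (M * Lᵀ)ᵀ * (M * Lᵀ) = L * (Mᵀ * M) * Lᵀ := by
      simp [transpose_mul, Matrix.mul_assoc]
    rw [e, Matrix.trace_mul_comm, ← Matrix.mul_assoc, ← hL, ← hM]
    exact h
  calc A * B = Lᵀ * (M * Lᵀ)ᵀ * M := by
        rw [hL, hM]; simp [transpose_mul, Matrix.mul_assoc]
    _ = 0 := by rw [hN]; simp

lemma fromBlocks_posSemidef {a b : ℕ} {A : Matrix (Fin a) (Fin a) ℝ}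
    {B : Matrix (Fin b) (Fin b) ℝ} (hA : A.PosSemidef) (hB : B.PosSemidef) :
    (fromBlocks A 0 0 B).PosSemidef := by
  refine posSemidef_iff_dotProduct_mulVec.mpr ⟨?_, ?_⟩
  · unfold Matrix.IsHermitian
    rw [fromBlocks_conjTranspose, hA.1.eq, hB.1.eq]
    simp
  · intro x
    have hx : x = Sum.elim (x ∘ Sum.inl) (x ∘ Sum.inr) := by
      funext s; cases s <;> rfl
    rw [hx, fromBlocks_mulVec]
    simp only [Function.star_sumElim, Matrix.zero_mulVec, add_zero, zero_add]
    rw [sumElim_dotProduct_sumElim]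
    exact add_nonneg (hA.dotProduct_mulVec_nonneg _) (hB.dotProduct_mulVec_nonneg _)

lemma posSemidef_zero' {a : ℕ} : (0 : Matrix (Fin a) (Fin a) ℝ).PosSemidef :=
  ⟨Matrix.isHermitian_zero, fun x => by simp⟩

lemma trace_submatrix_equiv' {m n : Type*} [Fintype m] [Fintype n] (e : m ≃ n)
    (M : Matrix n n ℝ) : (M.submatrix e e).trace = M.trace := by
  simp only [Matrix.trace, Matrix.diag, Matrix.submatrix_apply]
  exact Equiv.sum_comp e fun i => M i i

lemma trace_fromBlocks' {a b : ℕ} (X : Matrix (Fin a) (Fin a) ℝ) (Y Z)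
    (W : Matrix (Fin b) (Fin b) ℝ) :
    (fromBlocks X Y Z W).trace = X.trace + W.trace := by
  simp [Matrix.trace, Matrix.diag, Fintype.sum_sum_type, Matrix.fromBlocks]

lemma hasPsdFact_of_nonneg {p q : ℕ} (M : Matrix (Fin p) (Fin q) ℝ)
    (h : ∀ i j, 0 ≤ M i j) : HasPsdFact M q := by
  refine ⟨fun i => Matrix.diagonal (M i), fun j => Matrix.diagonal (Pi.single j 1),
    fun i => Matrix.PosSemidef.diagonal fun t => h i t,
    fun j => Matrix.PosSemidef.diagonal fun t => ?_, fun i j => ?_⟩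
  · rcases eq_or_ne t j with rfl | ht
    · simp
    · simp [Pi.single_apply, ht]
  · rw [Matrix.diagonal_mul_diagonal, Matrix.trace_diagonal]
    simp [Pi.single_apply, Finset.sum_ite_eq', mul_comm]

/-- Nonnegative entrywise matrices indexed by a sum type also admit psd factorizations. -/
lemma hasPsdFact_sum_of_nonneg {p₁ p₂ q₁ q₂ : ℕ}
    (M : Matrix (Fin p₁ ⊕ Fin p₂) (Fin q₁ ⊕ Fin q₂) ℝ)
    (h : ∀ i j, 0 ≤ M i j) : HasPsdFact M (q₁ + q₂) := by
  classical
  set e : Fin q₁ ⊕ Fin q₂ ≃ Fin (q₁ + q₂) := finSumFinEquiv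
  refine ⟨fun i => (Matrix.diagonal (fun t => M i (e.symm t))),
    fun j => Matrix.diagonal (Pi.single (e j) 1),
    fun i => Matrix.PosSemidef.diagonal fun t => h i _,
    fun j => Matrix.PosSemidef.diagonal fun t => ?_, fun i j => ?_⟩
  · rcases eq_or_ne t (e j) with rfl | ht
    · simp
    · simp [Pi.single_apply, ht]
  · rw [Matrix.diagonal_mul_diagonal, Matrix.trace_diagonal]
    have : ∀ t, M i (e.symm t) * ((Pi.single (e j) 1 : Fin (q₁ + q₂) → ℝ) t)
        = if t = e j then M i (e.symm t) else 0 := by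
      intro t; simp [Pi.single_apply]
    rw [Finset.sum_congr rfl fun t _ => this t, Finset.sum_ite_eq']
    simp

lemma hasPsdFact_fromBlocks {p₁ p₂ q₁ q₂ a b : ℕ} {P : Matrix (Fin p₁) (Fin q₁) ℝ}
    {R : Matrix (Fin p₂) (Fin q₂) ℝ}
    (h1 : HasPsdFact P a) (h2 : HasPsdFact R b) :
    HasPsdFact (fromBlocks P 0 0 R) (a + b) := by
  obtain ⟨A, B, hA, hB, hAB⟩ := h1
  obtain ⟨C, D, hC, hD, hCD⟩ := h2
  set e : Fin a ⊕ Fin b ≃ Fin (a + b) := finSumFinEquiv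
  refine ⟨Sum.elim (fun i => (fromBlocks (A i) 0 0 0).submatrix e.symm e.symm)
      (fun i => (fromBlocks 0 0 0 (C i)).submatrix e.symm e.symm),
    Sum.elim (fun j => (fromBlocks (B j) 0 0 0).submatrix e.symm e.symm)
      (fun j => (fromBlocks 0 0 0 (D j)).submatrix e.symm e.symm), ?_, ?_, ?_⟩
  · rintro (i | i)
    · exact (fromBlocks_posSemidef (hA i) posSemidef_zero').submatrix _
    · exact (fromBlocks_posSemidef posSemidef_zero' (hC i)).submatrix _
  · rintro (j | j)
    · exact (fromBlocks_posSemidef (hB j) posSemidef_zero').submatrix _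
    · exact (fromBlocks_posSemidef posSemidef_zero' (hD j)).submatrix _
  · rintro (i | i) (j | j) <;>
      simp [Matrix.submatrix_mul_equiv, Matrix.fromBlocks_multiply, trace_submatrix_equiv',
        trace_fromBlocks', hAB, hCD]


lemma hasPsdFact_compress {p q : ℕ} (M : Matrix (Fin p) (Fin q) ℝ) {k : ℕ}
    (A : Fin p → Matrix (Fin k) (Fin k) ℝ) (B : Fin q → Matrix (Fin k) (Fin k) ℝ)
    (hA : ∀ i, (A i).PosSemidef) (hB : ∀ j, (B j).PosSemidef)
    (U : Submodule ℝ (EuclideanSpace ℝ (Fin k)))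
    (htr : ∀ i j, M i j = (A i * projMat U * (B j * projMat U)).trace) :
    HasPsdFact M (Module.finrank ℝ U) := by
  refine ⟨fun i => (onbMat U)ᵀ * A i * onbMat U, fun j => (onbMat U)ᵀ * B j * onbMat U,
    fun i => ?_, fun j => ?_, fun i j => ?_⟩
  · have := (hA i).conjTranspose_mul_mul_same (onbMat U)
    rwa [conjTranspose_eq_transpose_of_trivial] at this
  · have := (hB j).conjTranspose_mul_mul_same (onbMat U)
    rwa [conjTranspose_eq_transpose_of_trivial] at this
  · rw [htr i j]
    have e1 : A i * projMat U * (B j * projMat U)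
        = (A i * (onbMat U * (onbMat U)ᵀ) * B j * onbMat U) * (onbMat U)ᵀ := by
      rw [projMat]; simp only [Matrix.mul_assoc]
    rw [e1, Matrix.trace_mul_comm]
    congr 1
    simp only [Matrix.mul_assoc]

lemma exists_small_facts {p₁ p₂ q₁ q₂ k : ℕ}
    {P : Matrix (Fin p₁) (Fin q₁) ℝ} {R : Matrix (Fin p₂) (Fin q₂) ℝ}
    (h : HasPsdFact (fromBlocks P 0 0 R) k) :
    ∃ u w : ℕ, u + w ≤ k ∧ HasPsdFact P u ∧ HasPsdFact R w := by
  classical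
  obtain ⟨A, B, hA, hB, hAB⟩ := h
  have hz12 : ∀ i j, A (Sum.inl i) * B (Sum.inr j) = 0 := fun i j =>
    psd_mul_eq_zero (hA _) (hB _) (by simpa using (hAB (Sum.inl i) (Sum.inr j)).symm)
  have hz21 : ∀ i j, A (Sum.inr i) * B (Sum.inl j) = 0 := fun i j =>
    psd_mul_eq_zero (hA _) (hB _) (by simpa using (hAB (Sum.inr i) (Sum.inl j)).symm)
  have hBsym : ∀ t, (B t)ᵀ = B t := fun t => by
    have := (hB t).1
    rwa [Matrix.IsHermitian, conjTranspose_eq_transpose_of_trivial] at this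
  have hAsym : ∀ t, (A t)ᵀ = A t := fun t => by
    have := (hA t).1
    rwa [Matrix.IsHermitian, conjTranspose_eq_transpose_of_trivial] at this
  set U : Submodule ℝ (EuclideanSpace ℝ (Fin k)) :=
    Submodule.span ℝ (⋃ j, Set.range (fun x => WithLp.toLp 2 (B (Sum.inl j) *ᵥ x))) with hU
  set W : Submodule ℝ (EuclideanSpace ℝ (Fin k)) :=
    Submodule.span ℝ (⋃ j, Set.range (fun x => WithLp.toLp 2 (B (Sum.inr j) *ᵥ x))) with hW
  set Z : Submodule ℝ (EuclideanSpace ℝ (Fin k)) := U ⊓ W with hZ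
  have colB1 : ∀ j x, WithLp.toLp 2 (B (Sum.inl j) *ᵥ x) ∈ U := fun j x =>
    Submodule.subset_span (Set.mem_iUnion.mpr ⟨j, ⟨x, rfl⟩⟩)
  have colB2 : ∀ j x, WithLp.toLp 2 (B (Sum.inr j) *ᵥ x) ∈ W := fun j x =>
    Submodule.subset_span (Set.mem_iUnion.mpr ⟨j, ⟨x, rfl⟩⟩)
  have killA1 : ∀ i, ∀ v ∈ W, A (Sum.inl i) *ᵥ v = 0 := by
    intro i
    have hle : W ≤ (LinearMap.ker ((A (Sum.inl i)).mulVecLin ∘ₗ (WithLp.linearEquiv 2 ℝ (Fin k → ℝ)).toLinearMap) :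
        Submodule ℝ (EuclideanSpace ℝ (Fin k))) := by
      rw [hW]
      apply Submodule.span_le.mpr
      rintro v hv
      obtain ⟨j, x, rfl⟩ := Set.mem_iUnion.mp hv
      show A (Sum.inl i) *ᵥ (B (Sum.inr j) *ᵥ x) = 0
      rw [Matrix.mulVec_mulVec, hz12, Matrix.zero_mulVec]
    exact fun v hv => hle hv
  have killA2 : ∀ i, ∀ v ∈ U, A (Sum.inr i) *ᵥ v = 0 := by
    intro i
    have hle : U ≤ (LinearMap.ker ((A (Sum.inr i)).mulVecLin ∘ₗ (WithLp.linearEquiv 2 ℝ (Fin k → ℝ)).toLinearMap) :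
        Submodule ℝ (EuclideanSpace ℝ (Fin k))) := by
      rw [hU]
      apply Submodule.span_le.mpr
      rintro v hv
      obtain ⟨j, x, rfl⟩ := Set.mem_iUnion.mp hv
      show A (Sum.inr i) *ᵥ (B (Sum.inl j) *ᵥ x) = 0
      rw [Matrix.mulVec_mulVec, hz21, Matrix.zero_mulVec]
    exact fun v hv => hle hv
  -- projection identities
  have ePB1 : ∀ j, projMat U * B (Sum.inl j) = B (Sum.inl j) := fun j =>
    ext_mulVec fun x => by
      rw [← Matrix.mulVec_mulVec, projMat_mulVec_eq_self U (colB1 j x)]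
  have ePB2 : ∀ j, projMat W * B (Sum.inr j) = B (Sum.inr j) := fun j =>
    ext_mulVec fun x => by
      rw [← Matrix.mulVec_mulVec, projMat_mulVec_eq_self W (colB2 j x)]
  have eBP1 : ∀ j, B (Sum.inl j) * projMat U = B (Sum.inl j) := fun j => by
    have := congrArg Matrix.transpose (ePB1 j)
    rwa [Matrix.transpose_mul, projMat_transpose, hBsym] at this
  have eBP2 : ∀ j, B (Sum.inr j) * projMat W = B (Sum.inr j) := fun j => by
    have := congrArg Matrix.transpose (ePB2 j)
    rwa [Matrix.transpose_mul, projMat_transpose, hBsym] at this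
  have eAZ1 : ∀ i, A (Sum.inl i) * projMat Z = 0 := fun i =>
    ext_mulVec fun x => by
      rw [← Matrix.mulVec_mulVec, Matrix.zero_mulVec]
      exact killA1 i _ ((inf_le_right : Z ≤ W) (projMat_mulVec_mem Z x))
  have eAZ2 : ∀ i, A (Sum.inr i) * projMat Z = 0 := fun i =>
    ext_mulVec fun x => by
      rw [← Matrix.mulVec_mulVec, Matrix.zero_mulVec]
      exact killA2 i _ ((inf_le_left : Z ≤ U) (projMat_mulVec_mem Z x))
  have eZA1 : ∀ i, projMat Z * A (Sum.inl i) = 0 := fun i => by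
    have := congrArg Matrix.transpose (eAZ1 i)
    rwa [Matrix.transpose_mul, projMat_transpose, hAsym, Matrix.transpose_zero] at this
  have eZA2 : ∀ i, projMat Z * A (Sum.inr i) = 0 := fun i => by
    have := congrArg Matrix.transpose (eAZ2 i)
    rwa [Matrix.transpose_mul, projMat_transpose, hAsym, Matrix.transpose_zero] at this
  -- the two compressed subspaces
  have hdecU : projMat U = projMat Z + projMat (Zᗮ ⊓ U) := projMat_decomp inf_le_left
  have hdecW : projMat W = projMat Z + projMat (Zᗮ ⊓ W) := projMat_decomp inf_le_right
  have hPiU : projMat (Zᗮ ⊓ U) = projMat U - projMat Z := by rw [hdecU]; abel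
  have hPiW : projMat (Zᗮ ⊓ W) = projMat W - projMat Z := by rw [hdecW]; abel
  -- trace identities
  have keytr : ∀ (X Y PU PZ : Matrix (Fin k) (Fin k) ℝ)
      (hXZ : X * PZ = 0) (hZX : PZ * X = 0) (hPY : PU * Y = Y) (hYP : Y * PU = Y),
      (X * (PU - PZ) * (Y * (PU - PZ))).trace = (X * Y).trace := by
    intro X Y PU PZ hXZ hZX hPY hYP
    have e1 : X * (PU - PZ) = X * PU := by rw [Matrix.mul_sub, hXZ, sub_zero]
    have e2 : Y * (PU - PZ) = Y * PU - Y * PZ := by rw [Matrix.mul_sub]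
    rw [e1, e2, Matrix.mul_sub, Matrix.trace_sub]
    have e3 : X * PU * (Y * PU) = X * Y := by
      calc X * PU * (Y * PU) = X * (PU * Y) * PU := by simp only [Matrix.mul_assoc]
        _ = X * Y := by rw [hPY, Matrix.mul_assoc, hYP]
    have e4 : (X * PU * (Y * PZ)).trace = 0 := by
      have : X * PU * (Y * PZ) = X * Y * PZ := by
        calc X * PU * (Y * PZ) = X * (PU * Y) * PZ := by simp only [Matrix.mul_assoc]
          _ = X * Y * PZ := by rw [hPY]
      rw [this, Matrix.trace_mul_comm, ← Matrix.mul_assoc, hZX, Matrix.zero_mul,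
        Matrix.trace_zero]
    rw [e3, e4, sub_zero]
  have factP : HasPsdFact P (Module.finrank ℝ (Zᗮ ⊓ U : Submodule ℝ (EuclideanSpace ℝ (Fin k)))) := by
    refine hasPsdFact_compress P (fun i => A (Sum.inl i)) (fun j => B (Sum.inl j))
      (fun i => hA _) (fun j => hB _) (Zᗮ ⊓ U) (fun i j => ?_)
    rw [hPiU, keytr _ _ _ _ (eAZ1 i) (eZA1 i) (ePB1 j) (eBP1 j)]
    simpa using hAB (Sum.inl i) (Sum.inl j)
  have factR : HasPsdFact R (Module.finrank ℝ (Zᗮ ⊓ W : Submodule ℝ (EuclideanSpace ℝ (Fin k)))) := by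
    refine hasPsdFact_compress R (fun i => A (Sum.inr i)) (fun j => B (Sum.inr j))
      (fun i => hA _) (fun j => hB _) (Zᗮ ⊓ W) (fun i j => ?_)
    rw [hPiW, keytr _ _ _ _ (eAZ2 i) (eZA2 i) (ePB2 j) (eBP2 j)]
    simpa using hAB (Sum.inr i) (Sum.inr j)
  -- dimension count
  have hdisj : ((Zᗮ ⊓ U) ⊓ (Zᗮ ⊓ W) : Submodule ℝ (EuclideanSpace ℝ (Fin k))) = ⊥ := by
    rw [eq_bot_iff]
    rintro x hx
    obtain ⟨⟨hxo, hxu⟩, ⟨_, hxw⟩⟩ := hx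
    have hxZ : x ∈ Z := ⟨hxu, hxw⟩
    have : (⟪x, x⟫ : ℝ) = 0 := (Submodule.mem_orthogonal Z x).mp hxo x hxZ
    simpa [Submodule.mem_bot] using inner_self_eq_zero.mp this
  have hdim := Submodule.finrank_sup_add_finrank_inf_eq
    (Zᗮ ⊓ U : Submodule ℝ (EuclideanSpace ℝ (Fin k))) (Zᗮ ⊓ W)
  rw [hdisj, finrank_bot, add_zero] at hdim
  have hle : Module.finrank ℝ (((Zᗮ ⊓ U) ⊔ (Zᗮ ⊓ W)) :
      Submodule ℝ (EuclideanSpace ℝ (Fin k))) ≤ k := by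
    have h1 := Submodule.finrank_le (((Zᗮ ⊓ U) ⊔ (Zᗮ ⊓ W)) :
      Submodule ℝ (EuclideanSpace ℝ (Fin k)))
    rwa [finrank_euclideanSpace_fin] at h1
  exact ⟨_, _, by omega, factP, factR⟩

end Aux

theorem psdRank_blockDiagonal {p₁ p₂ q₁ q₂ : ℕ}
    (P : Matrix (Fin p₁) (Fin q₁) ℝ) (R : Matrix (Fin p₂) (Fin q₂) ℝ)
    (hP : ∀ i j, 0 ≤ P i j) (hR : ∀ i j, 0 ≤ R i j) :
    psdRank (Matrix.fromBlocks P 0 0 R) = psdRank P + psdRank R := by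
  have hMnn : ∀ i j, 0 ≤ Matrix.fromBlocks P 0 0 R i j := by
    rintro (i | i) (j | j)
    · simpa using hP i j
    · simp [Matrix.fromBlocks]
    · simp [Matrix.fromBlocks]
    · simpa using hR i j
  have hMne : {k | HasPsdFact (Matrix.fromBlocks P 0 0 R) k}.Nonempty :=
    ⟨q₁ + q₂, hasPsdFact_sum_of_nonneg _ hMnn⟩
  have hPne : {k | HasPsdFact P k}.Nonempty := ⟨q₁, hasPsdFact_of_nonneg P hP⟩
  have hRne : {k | HasPsdFact R k}.Nonempty := ⟨q₂, hasPsdFact_of_nonneg R hR⟩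
  apply le_antisymm
  · exact Nat.sInf_le (hasPsdFact_fromBlocks (Nat.sInf_mem hPne) (Nat.sInf_mem hRne))
  · obtain ⟨u, w, huw, hu, hw⟩ := exists_small_facts (Nat.sInf_mem hMne)
    have h1 : psdRank P ≤ u := Nat.sInf_le hu
    have h2 : psdRank R ≤ w := Nat.sInf_le hw
    have h3 : psdRank (Matrix.fromBlocks P 0 0 R) = sInf {k | HasPsdFact (Matrix.fromBlocks P 0 0 R) k} := rfl
    omega
end

section
/- The set of nonnegative p×q matrices of psd rank at most k is closed: if (Mⁿ) is a sequence of nonnegative matrices converging to M with rank_psd(Mⁿ) ≤ k for all n, then rank_psd(M) ≤ k. -/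
open Matrix

/-! ### Auxiliary lemmas -/

section Aux

open Filter

attribute [local instance] Matrix.normedAddCommGroup Matrix.normedSpace

lemma psd_diag_nonneg {k : ℕ} {A : Matrix (Fin k) (Fin k) ℝ} (hA : A.PosSemidef) (a : Fin k) :
    0 ≤ A a a := by
  have := hA.dotProduct_mulVec_nonneg (Pi.single a 1)
  simpa [mulVec_single, single_dotProduct] using this

lemma psd_abs_entry_le {k : ℕ} {A : Matrix (Fin k) (Fin k) ℝ} (hA : A.PosSemidef)
    (a b : Fin k) : |A a b| ≤ A a a + A b b := by
  have hsym : A b a = A a b := by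
    conv_lhs => rw [← hA.1]
    simp [conjTranspose_apply]
  have h1 := hA.dotProduct_mulVec_nonneg (Pi.single a 1 + Pi.single b 1)
  have h2 := hA.dotProduct_mulVec_nonneg (Pi.single a 1 - Pi.single b 1)
  simp only [star_trivial, mulVec_add, mulVec_sub, mulVec_single, dotProduct_add, dotProduct_sub,
    add_dotProduct, sub_dotProduct, single_dotProduct, mul_one, one_mul, MulOpposite.op_one,
    one_smul, col_apply] at h1 h2
  have ha := psd_diag_nonneg hA a
  have hb := psd_diag_nonneg hA b
  rw [abs_le]
  constructor <;> linarith

lemma psd_trace_nonneg {k : ℕ} {A : Matrix (Fin k) (Fin k) ℝ} (hA : A.PosSemidef) :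
    0 ≤ A.trace := Finset.sum_nonneg fun a _ => psd_diag_nonneg hA a

lemma psd_diag_le_trace {k : ℕ} {A : Matrix (Fin k) (Fin k) ℝ} (hA : A.PosSemidef) (a : Fin k) :
    A a a ≤ A.trace :=
  Finset.single_le_sum (fun b _ => psd_diag_nonneg hA b) (Finset.mem_univ a)

open scoped MatrixOrder in
/-- Any psd factorization can be rescaled to one with uniformly bounded entries. -/
lemma normalized_fact {p q k : ℕ} (M : Matrix (Fin p) (Fin q) ℝ) (c : ℝ)
    (hc : ∀ i j, M i j ≤ c) (h : HasPsdFact M k) :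
    ∃ (A : Fin p → Matrix (Fin k) (Fin k) ℝ) (B : Fin q → Matrix (Fin k) (Fin k) ℝ),
      IsPsdFact M A B ∧ (∀ i a b, |A i a b| ≤ 2) ∧
      (∀ j a b, |B j a b| ≤ 2 * (p * c + 1)) := by
  obtain ⟨A, B, hA, hB, hM⟩ := h
  set S : Matrix (Fin k) (Fin k) ℝ := ∑ i, A i with hSdef
  have hS : S.PosSemidef :=
    Finset.sum_induction A Matrix.PosSemidef (fun a b ha hb => ha.add hb)
      Matrix.PosSemidef.zero (fun i _ => hA i)
  set t : ℝ := 1 + ∑ j, (B j).trace with htdef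
  have ht : 0 < t := by
    have : 0 ≤ ∑ j, (B j).trace := Finset.sum_nonneg fun j _ => psd_trace_nonneg (hB j)
    linarith
  set ε : ℝ := t⁻¹ with hεdef
  have hε : 0 < ε := inv_pos.mpr ht
  set Sε : Matrix (Fin k) (Fin k) ℝ := S + ε • 1 with hSε_def
  have hsmul : (ε • (1 : Matrix (Fin k) (Fin k) ℝ)) = diagonal (fun _ => ε) :=
    Matrix.smul_one_eq_diagonal ε
  have hSε : Sε.PosDef := by
    rw [hSε_def, hsmul]
    exact Matrix.PosDef.posSemidef_add hS (Matrix.PosDef.diagonal fun _ => hε)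
  set T : Matrix (Fin k) (Fin k) ℝ := CFC.sqrt Sε with hTdef
  have hT : T.PosSemidef := (CFC.sqrt_nonneg Sε).posSemidef
  have hTT : T * T = Sε := CFC.sqrt_mul_sqrt_self Sε hSε.posSemidef.nonneg
  have hdet : IsUnit T.det := by
    have h1 : T.det * T.det = Sε.det := by rw [← det_mul, hTT]
    have h2 : Sε.det ≠ 0 := ne_of_gt hSε.det_pos
    have : T.det ≠ 0 := fun h => h2 (by rw [← h1, h, zero_mul])
    exact this.isUnit
  have hinv : T * T⁻¹ = 1 := mul_nonsing_inv _ hdet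
  have hinv' : T⁻¹ * T = 1 := nonsing_inv_mul _ hdet
  have hTinvH : T⁻¹ᴴ = T⁻¹ := hT.isHermitian.inv
  have hTH : Tᴴ = T := hT.isHermitian
  refine ⟨fun i => T⁻¹ * A i * T⁻¹, fun j => T * B j * T, ⟨?_, ?_, ?_⟩, ?_, ?_⟩
  · intro i
    have := (hA i).mul_mul_conjTranspose_same T⁻¹
    rwa [hTinvH] at this
  · intro j
    have := (hB j).mul_mul_conjTranspose_same T
    rwa [hTH] at this
  · intro i j
    have e1 : (T⁻¹ * A i * T⁻¹) * (T * B j * T) = T⁻¹ * (A i * ((T⁻¹ * T) * (B j * T))) := by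
      simp only [Matrix.mul_assoc]
    rw [e1, hinv', Matrix.one_mul, Matrix.trace_mul_comm]
    have e2 : A i * (B j * T) * T⁻¹ = A i * (B j * (T * T⁻¹)) := by
      simp only [Matrix.mul_assoc]
    rw [e2, hinv, Matrix.mul_one, hM]
  · -- entry bounds on the A side
    intro i a b
    have hA'i : (T⁻¹ * A i * T⁻¹).PosSemidef := by
      have := (hA i).mul_mul_conjTranspose_same T⁻¹
      rwa [hTinvH] at this
    have hsum : ∑ i', T⁻¹ * A i' * T⁻¹ = T⁻¹ * S * T⁻¹ := by
      rw [hSdef, Finset.mul_sum, Finset.sum_mul]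
    have hNpsd : (T⁻¹ * (ε • (1 : Matrix (Fin k) (Fin k) ℝ)) * T⁻¹).PosSemidef := by
      have h0 : (ε • (1 : Matrix (Fin k) (Fin k) ℝ)).PosSemidef := by
        rw [hsmul]; exact Matrix.PosSemidef.diagonal fun _ => hε.le
      have := h0.mul_mul_conjTranspose_same T⁻¹
      rwa [hTinvH] at this
    have hdecomp : T⁻¹ * S * T⁻¹ = 1 - T⁻¹ * (ε • (1 : Matrix (Fin k) (Fin k) ℝ)) * T⁻¹ := by
      have : S = Sε - ε • (1 : Matrix (Fin k) (Fin k) ℝ) := by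
        rw [hSε_def, add_sub_cancel_right]
      rw [this, Matrix.mul_sub, Matrix.sub_mul, ← hTT]
      congr 1
      calc T⁻¹ * (T * T) * T⁻¹ = T⁻¹ * T * (T * T⁻¹) := by simp only [Matrix.mul_assoc]
        _ = 1 := by rw [hinv', hinv, Matrix.one_mul]
    have hdiag : ∀ (i' : Fin p) (e : Fin k), (T⁻¹ * A i' * T⁻¹) e e ≤ 1 := by
      intro i' e
      have h1 : (T⁻¹ * A i' * T⁻¹) e e ≤ ∑ i'', (T⁻¹ * A i'' * T⁻¹) e e := by
        apply Finset.single_le_sum (f := fun i'' => (T⁻¹ * A i'' * T⁻¹) e e)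
          (fun i'' _ => psd_diag_nonneg (by
            have := (hA i'').mul_mul_conjTranspose_same T⁻¹
            rwa [hTinvH] at this) e) (Finset.mem_univ i')
      have h2 : ∑ i'', (T⁻¹ * A i'' * T⁻¹) e e = (T⁻¹ * S * T⁻¹) e e := by
        rw [← hsum]
        simp [Matrix.sum_apply]
      have h3 : (T⁻¹ * S * T⁻¹) e e ≤ 1 := by
        rw [hdecomp]
        have := psd_diag_nonneg hNpsd e
        simp only [Matrix.sub_apply, Matrix.one_apply_eq]
        linarith
      linarith
    have habs := psd_abs_entry_le hA'i a b
    have h4 := hdiag i a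
    have h5 := hdiag i b
    linarith
  · -- entry bounds on the B side
    intro j a b
    have hB'j : (T * B j * T).PosSemidef := by
      have := (hB j).mul_mul_conjTranspose_same T
      rwa [hTH] at this
    have htr : (T * B j * T).trace ≤ p * c + 1 := by
      have e1 : (T * B j * T).trace = (T * T * B j).trace := by
        rw [Matrix.trace_mul_cycle]
      have e2 : (T * T * B j).trace = (S * B j).trace + ε * (B j).trace := by
        rw [hTT, hSε_def, Matrix.add_mul, Matrix.trace_add, Matrix.smul_mul, Matrix.one_mul,
          Matrix.trace_smul, smul_eq_mul]
      have e3 : (S * B j).trace = ∑ i, M i j := by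
        rw [hSdef, Finset.sum_mul, Matrix.trace_sum]
        exact Finset.sum_congr rfl fun i _ => (hM i j).symm
      have h4 : ∑ i, M i j ≤ p * c := by
        calc ∑ i, M i j ≤ ∑ _i : Fin p, c := Finset.sum_le_sum fun i _ => hc i j
          _ = p * c := by simp [mul_comm]
      have h5 : ε * (B j).trace ≤ 1 := by
        rw [hεdef, inv_mul_le_iff₀ ht, mul_one, htdef]
        have : (B j).trace ≤ ∑ j', (B j').trace :=
          Finset.single_le_sum (fun j' _ => psd_trace_nonneg (hB j')) (Finset.mem_univ j)
        linarith
      rw [e1, e2, e3]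
      linarith
    have habs := psd_abs_entry_le hB'j a b
    have h6 := psd_diag_le_trace hB'j a
    have h7 := psd_diag_le_trace hB'j b
    linarith

/-- A limit of positive semidefinite matrices is positive semidefinite. -/
lemma psd_of_tendsto {k : ℕ} {C : ℕ → Matrix (Fin k) (Fin k) ℝ} {L : Matrix (Fin k) (Fin k) ℝ}
    (h : ∀ n, (C n).PosSemidef) (hc : Tendsto C atTop (nhds L)) : L.PosSemidef := by
  refine .of_dotProduct_mulVec_nonneg ?_ ?_
  · have h1 : Tendsto (fun n => (C n)ᴴ) atTop (nhds Lᴴ) :=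
      (continuous_id.matrix_conjTranspose.tendsto L).comp hc
    have h2 : (fun n => (C n)ᴴ) = C := funext fun n => (h n).1
    rw [h2] at h1
    exact tendsto_nhds_unique h1 hc
  · intro x
    have hcont : Continuous (fun Y : Matrix (Fin k) (Fin k) ℝ => star x ⬝ᵥ Y *ᵥ x) :=
      continuous_const.dotProduct (continuous_id.matrix_mulVec continuous_const)
    have h1 : Tendsto (fun n => star x ⬝ᵥ (C n) *ᵥ x) atTop (nhds (star x ⬝ᵥ L *ᵥ x)) :=
      (hcont.tendsto L).comp hc
    exact ge_of_tendsto' h1 fun n => (h n).dotProduct_mulVec_nonneg x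

theorem psdRank_le_of_tendsto_aux {p q k : ℕ}
    (Mseq : ℕ → Matrix (Fin p) (Fin q) ℝ) (M : Matrix (Fin p) (Fin q) ℝ)
    (hfact : ∀ n, HasPsdFact (Mseq n) k)
    (hlim : Filter.Tendsto Mseq Filter.atTop (nhds M)) :
    HasPsdFact M k := by
  classical
  -- a uniform bound on the entries of the `Mseq n`
  have hb : BddAbove (Set.range fun n => ‖Mseq n‖) :=
    hlim.norm.isBoundedUnder_le.bddAbove_range
  obtain ⟨R0, hR0⟩ := hb
  set R : ℝ := max R0 0 with hRdef
  have hR : 0 ≤ R := le_max_right _ _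
  have hc : ∀ n i j, Mseq n i j ≤ R := by
    intro n i j
    have h1 : |Mseq n i j| ≤ ‖Mseq n‖ := Matrix.norm_entry_le_entrywise_sup_norm (Mseq n)
    have h2 : ‖Mseq n‖ ≤ R0 := hR0 ⟨n, rfl⟩
    calc Mseq n i j ≤ |Mseq n i j| := le_abs_self _
      _ ≤ R0 := h1.trans h2
      _ ≤ R := le_max_left _ _
  set C2 : ℝ := 2 * (p * R + 1) with hC2def
  have hC2 : 0 ≤ C2 := by positivity
  set C : ℝ := max 2 C2 with hCdef
  have hC : 0 ≤ C := le_trans (by norm_num) (le_max_left 2 C2)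
  -- choose normalized factorizations
  have hch : ∀ n, ∃ AB : (Fin p → Matrix (Fin k) (Fin k) ℝ) × (Fin q → Matrix (Fin k) (Fin k) ℝ),
      IsPsdFact (Mseq n) AB.1 AB.2 ∧ (∀ i a b, |AB.1 i a b| ≤ 2) ∧
      (∀ j a b, |AB.2 j a b| ≤ C2) := by
    intro n
    obtain ⟨A, B, h1, h2, h3⟩ := normalized_fact (Mseq n) R (fun i j => hc n i j) (hfact n)
    exact ⟨(A, B), h1, h2, h3⟩
  choose F hF1 hF2 hF3 using hch
  -- the normalized factorizations lie in a closed ball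
  have hmem : ∀ n, F n ∈ Metric.closedBall
      (0 : (Fin p → Matrix (Fin k) (Fin k) ℝ) × (Fin q → Matrix (Fin k) (Fin k) ℝ)) C := by
    intro n
    rw [Metric.mem_closedBall, dist_zero_right, Prod.norm_def]
    apply max_le
    · refine (pi_norm_le_iff_of_nonneg hC).mpr fun i => ?_
      refine (Matrix.norm_le_iff hC).mpr fun a b => ?_
      rw [Real.norm_eq_abs]
      exact (hF2 n i a b).trans (le_max_left _ _)
    · refine (pi_norm_le_iff_of_nonneg hC).mpr fun j => ?_
      refine (Matrix.norm_le_iff hC).mpr fun a b => ?_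
      rw [Real.norm_eq_abs]
      exact (hF3 n j a b).trans (le_max_right _ _)
  obtain ⟨L, -, φ, hφ, hLtend⟩ :=
    tendsto_subseq_of_bounded Metric.isBounded_closedBall hmem
  refine ⟨L.1, L.2, ?_, ?_, ?_⟩
  · intro i
    have htend : Tendsto (fun n => (F (φ n)).1 i) atTop (nhds (L.1 i)) :=
      ((((continuous_apply i).comp continuous_fst).tendsto L).comp hLtend)
    exact psd_of_tendsto (fun n => (hF1 (φ n)).1 i) htend
  · intro j
    have htend : Tendsto (fun n => (F (φ n)).2 j) atTop (nhds (L.2 j)) :=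
      ((((continuous_apply j).comp continuous_snd).tendsto L).comp hLtend)
    exact psd_of_tendsto (fun n => (hF1 (φ n)).2.1 j) htend
  · intro i j
    have hMn : Tendsto (fun n => Mseq (φ n) i j) atTop (nhds (M i j)) := by
      have hcont : Continuous (fun N : Matrix (Fin p) (Fin q) ℝ => N i j) :=
        (continuous_apply j).comp (continuous_apply i)
      exact (hcont.tendsto M).comp (hlim.comp hφ.tendsto_atTop)
    have htr : Tendsto (fun n => ((F (φ n)).1 i * (F (φ n)).2 j).trace) atTop
        (nhds ((L.1 i * L.2 j).trace)) := by
      have hcont : Continuous (fun Y : (Fin p → Matrix (Fin k) (Fin k) ℝ) ×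
          (Fin q → Matrix (Fin k) (Fin k) ℝ) => (Y.1 i * Y.2 j).trace) :=
        (((continuous_apply i).comp continuous_fst).matrix_mul
          ((continuous_apply j).comp continuous_snd)).matrix_trace
      exact (hcont.tendsto L).comp hLtend
    have heq : (fun n => Mseq (φ n) i j) = fun n => ((F (φ n)).1 i * (F (φ n)).2 j).trace :=
      funext fun n => (hF1 (φ n)).2.2 i j
    rw [heq] at hMn
    exact tendsto_nhds_unique hMn htr

end Aux

theorem psdRank_le_of_tendsto {p q k : ℕ}
    (Mseq : ℕ → Matrix (Fin p) (Fin q) ℝ) (M : Matrix (Fin p) (Fin q) ℝ)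
    (hseq : ∀ n i j, 0 ≤ Mseq n i j)
    (hfact : ∀ n, HasPsdFact (Mseq n) k)
    (hlim : Filter.Tendsto Mseq Filter.atTop (nhds M)) :
    HasPsdFact M k :=
  psdRank_le_of_tendsto_aux Mseq M hfact hlim
end

section
/- For any nonnegative matrix M, rank_psd(M) ≤ rank_√(M): if N is a matrix with N_{ij}² = M_{ij} for all i,j and rank(N) = r, then M admits a psd factorization of size r using rank-one psd factors. In particular, for a 0/1 matrix M, rank_psd(M) ≤ rank(M). -/
open Matrix

lemma posSemidef_vecMulVec' {k : ℕ} (a : Fin k → ℝ) :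
    (Matrix.vecMulVec a a).PosSemidef := by
  rw [posSemidef_iff_dotProduct_mulVec]
  constructor
  · ext i j
    simp [conjTranspose, vecMulVec_apply, mul_comm]
  · intro x
    have h : (star x) ⬝ᵥ ((vecMulVec a a) *ᵥ x) = (∑ i, a i * x i) ^ 2 := by
      simp only [star_trivial, dotProduct, mulVec, vecMulVec_apply, dotProduct]
      rw [sq, Finset.sum_mul_sum]
      apply Finset.sum_congr rfl; intro i _
      rw [Finset.mul_sum]
      apply Finset.sum_congr rfl; intro j _
      ring
    rw [h]
    positivity

lemma trace_vecMulVec_mul {k : ℕ} (a b : Fin k → ℝ) :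
    ((vecMulVec a a) * (vecMulVec b b)).trace = (∑ i, a i * b i) ^ 2 := by
  simp only [trace, diag_apply, mul_apply, vecMulVec_apply]
  rw [sq, Finset.sum_mul_sum]
  apply Finset.sum_congr rfl; intro i _
  apply Finset.sum_congr rfl; intro j _
  ring

lemma exists_fact {p q r : ℕ} (N : Matrix (Fin p) (Fin q) ℝ) (hr : N.rank = r) :
    ∃ (v : Fin p → Fin r → ℝ) (w : Fin q → Fin r → ℝ),
      ∀ i j, N i j = ∑ k, v i k * w j k := by
  have hspan : Module.finrank ℝ (Submodule.span ℝ (Set.range Nᵀ)) = r := by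
    exact (rank_eq_finrank_span_cols N).symm.trans hr
  let b := Module.finBasisOfFinrankEq ℝ _ hspan
  have hmem : ∀ j, Nᵀ j ∈ Submodule.span ℝ (Set.range Nᵀ) :=
    fun j => Submodule.subset_span ⟨j, rfl⟩
  refine ⟨fun i k => (b k : Fin p → ℝ) i,
    fun j k => b.repr ⟨Nᵀ j, hmem j⟩ k, fun i j => ?_⟩
  have h1 : (⟨Nᵀ j, hmem j⟩ : Submodule.span ℝ (Set.range Nᵀ))
      = ∑ k, b.repr ⟨Nᵀ j, hmem j⟩ k • b k := (b.sum_repr ⟨Nᵀ j, hmem j⟩).symm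
  have h2 := congrArg (fun x : Submodule.span ℝ (Set.range Nᵀ) => (x : Fin p → ℝ) i) h1
  simp only [Submodule.coe_sum, Submodule.coe_smul, Finset.sum_apply, Pi.smul_apply,
    smul_eq_mul] at h2
  have h3 : Nᵀ j i = N i j := rfl
  rw [h3] at h2
  rw [h2]
  apply Finset.sum_congr rfl; intro k _; ring

lemma key_fact {p q r : ℕ} (M N : Matrix (Fin p) (Fin q) ℝ)
    (hN : ∀ i j, (N i j) ^ 2 = M i j) (hr : N.rank = r) :
    ∃ (v : Fin p → Fin r → ℝ) (w : Fin q → Fin r → ℝ),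
      IsPsdFact M (fun i => Matrix.vecMulVec (v i) (v i))
        (fun j => Matrix.vecMulVec (w j) (w j)) := by
  obtain ⟨v, w, h⟩ := exists_fact N hr
  exact ⟨v, w, fun i => posSemidef_vecMulVec' _, fun j => posSemidef_vecMulVec' _,
    fun i j => by rw [← hN i j, h i j, trace_vecMulVec_mul]⟩

theorem psdRank_le_sqrtRank {p q r : ℕ} (M N : Matrix (Fin p) (Fin q) ℝ)
    (hM : ∀ i j, 0 ≤ M i j) (hN : ∀ i j, (N i j) ^ 2 = M i j) (hr : N.rank = r) :
    (∃ (v : Fin p → Fin r → ℝ) (w : Fin q → Fin r → ℝ),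
      IsPsdFact M (fun i => Matrix.vecMulVec (v i) (v i))
        (fun j => Matrix.vecMulVec (w j) (w j))) ∧
    ∀ (p' q' : ℕ) (M' : Matrix (Fin p') (Fin q') ℝ),
      (∀ i j, M' i j = 0 ∨ M' i j = 1) → psdRank M' ≤ M'.rank := by
  refine ⟨key_fact M N hN hr, fun p' q' M' h01 => ?_⟩
  apply Nat.sInf_le
  have hN' : ∀ i j, (M' i j) ^ 2 = M' i j := fun i j => by
    rcases h01 i j with h | h <;> rw [h] <;> norm_num
  obtain ⟨v, w, hf⟩ := key_fact M' M' hN' rfl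
  exact ⟨_, _, hf⟩
end
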